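/- Let A ⊆ B be a C*-inclusion and f₁, f₂ pure states on A whose GNS representations are unitarily equivalent. If f₁ extends uniquely to a state on B, then so does f₂. -/

import Mathlib

open scoped ComplexOrder ComplexInnerProductSpace
open Filter Topology

noncomputable section

section States

variable {A : Type*} [NormedRing A] [NormedAlgebra ℂ A] [PartialOrder A]

/-- A state on a C*-algebra: a positive linear functional of norm one. -/
def IsState (f : A →L[ℂ] ℂ) : Prop := ‖f‖ = 1 ∧ ∀ a : A, 0 ≤ a → 0 ≤ f a

/-- A pure state: an extreme point of the state space. -/
def IsPureState (f : A →L[ℂ] ℂ) : Prop :=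
  IsState f ∧ ∀ g h : A →L[ℂ] ℂ, IsState g → IsState h →
    ∀ t : ℝ, 0 < t → t < 1 → f = (t : ℂ) • g + (((1 - t : ℝ)) : ℂ) • h → g = f ∧ h = f

end States

/-- A representation of `A` on a complex Hilbert space. -/
structure RepOn (A : Type*) [NormedRing A] [StarRing A] [NormedAlgebra ℂ A] where
  space : Type*
  [ng : NormedAddCommGroup space]
  [ip : InnerProductSpace ℂ space]
  [cs : CompleteSpace space]
  π : A →⋆ₐ[ℂ] (space →L[ℂ] space)

attribute [instance] RepOn.ng RepOn.ip RepOn.cs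

section Reps

variable {A : Type*} [NormedRing A] [StarRing A] [NormedAlgebra ℂ A]

/-- Unitary equivalence of representations. -/
def RepUnitarilyEquiv (R S : RepOn A) : Prop :=
  ∃ U : R.space ≃ₗᵢ[ℂ] S.space, ∀ (a : A) (v : R.space), U (R.π a v) = S.π a (U v)

/-- `R` together with the unit cyclic vector `ξ` is a GNS representation for `f`. -/
def IsGNSRep (f : A →L[ℂ] ℂ) (R : RepOn A) (ξ : R.space) : Prop :=
  ‖ξ‖ = 1 ∧ (∀ x : A, f x = ⟪ξ, R.π x ξ⟫) ∧
    Dense ((Submodule.span ℂ (Set.range fun x : A => R.π x ξ) : Submodule ℂ R.space) :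
      Set R.space)

/-- Irreducibility: the representation is non-zero and has no proper non-trivial closed
invariant subspace. -/
def RepIrreducible (R : RepOn A) : Prop :=
  (∃ (a : A) (v : R.space), R.π a v ≠ 0) ∧
    ∀ S : Submodule ℂ R.space, IsClosed (S : Set R.space) →
      (∀ (a : A), ∀ v ∈ S, R.π a v ∈ S) → S = ⊥ ∨ S = ⊤

end Reps

section UExt

variable {A B : Type*} [NormedRing A] [StarRing A] [NormedAlgebra ℂ A] [PartialOrder A]
  [NormedRing B] [StarRing B] [NormedAlgebra ℂ B] [PartialOrder B]

/-- The pure state `f` on `A` extends uniquely to a state on `B`. -/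
def UniquelyExtends (ι : A →⋆ₐ[ℂ] B) (f : A →L[ℂ] ℂ) : Prop :=
  ∃! g : B →L[ℂ] ℂ, IsState g ∧ ∀ a : A, g (ι a) = f a

/-- The almost extension property: the pure states on `A` extending uniquely to `B` are
weak-* dense in the pure state space of `A`. -/
def AlmostExtensionProperty (ι : A →⋆ₐ[ℂ] B) : Prop :=
  ∀ f : A →L[ℂ] ℂ, IsPureState f → ∀ ε : ℝ, 0 < ε → ∀ s : Finset A,
    ∃ g : A →L[ℂ] ℂ, IsPureState g ∧ UniquelyExtends ι g ∧ ∀ a ∈ s, ‖f a - g a‖ < ε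

end UExt


set_option linter.unusedSectionVars false
set_option maxHeartbeats 1000000

section AuxPos

variable {B : Type*} [NormedRing B] [StarRing B] [CStarRing B] [NormedAlgebra ℂ B]
  [StarModule ℂ B] [PartialOrder B] [StarOrderedRing B] [CompleteSpace B]

namespace StateAux

/-- Positivity of a linear functional. -/
def Pos (φ : B →L[ℂ] ℂ) : Prop := ∀ b : B, 0 ≤ b → 0 ≤ φ b

variable {φ : B →L[ℂ] ℂ}

lemma Pos.im_zero (hφ : Pos φ) (z : B) : (φ (star z * z)).im = 0 := by
  have := hφ _ (star_mul_self_nonneg z)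
  simpa using (Complex.le_def.mp this).2.symm

lemma Pos.re_nonneg (hφ : Pos φ) (z : B) : 0 ≤ (φ (star z * z)).re := by
  have := hφ _ (star_mul_self_nonneg z)
  simpa using (Complex.le_def.mp this).1

lemma Pos.im_add (hφ : Pos φ) (u w : B) :
    (φ (star u * w)).im + (φ (star w * u)).im = 0 := by
  have hexp : star (u + w) * (u + w)
      = star u * u + (star u * w + (star w * u + star w * w)) := by
    rw [star_add]; noncomm_ring
  have h0 := hφ.im_zero (u + w)
  rw [hexp, map_add, map_add, map_add] at h0
  simp only [Complex.add_im, hφ.im_zero u, hφ.im_zero w] at h0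
  linarith

lemma Pos.conj_symm (hφ : Pos φ) (x y : B) :
    (starRingEnd ℂ) (φ (star y * x)) = φ (star x * y) := by
  have h1 := hφ.im_add x y
  have h2 := hφ.im_add x (Complex.I • y)
  have e1 : star x * (Complex.I • y) = Complex.I • (star x * y) := mul_smul_comm _ _ _
  have e2 : star (Complex.I • y) * x = (-Complex.I) • (star y * x) := by
    rw [star_smul, smul_mul_assoc]
    simp [Complex.conj_I]
  rw [e1, e2, map_smul, map_smul] at h2
  simp only [smul_eq_mul, Complex.mul_im, Complex.I_re, Complex.I_im, Complex.neg_im,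
    Complex.neg_re, neg_mul, one_mul, zero_mul] at h2
  apply Complex.ext <;> simp only [Complex.conj_re, Complex.conj_im] <;> linarith


lemma Pos.mono (hφ : Pos φ) {u w : B} (h : u ≤ w) : φ u ≤ φ w := by
  have := hφ _ (sub_nonneg.mpr h)
  rw [map_sub] at this
  exact sub_nonneg.mp this

lemma Pos.cauchy_schwarz (hφ : Pos φ) (x y : B) :
    ‖φ (star x * y)‖ ^ 2 ≤ (φ (star x * x)).re * (φ (star y * y)).re := by
  letI c : PreInnerProductSpace.Core ℂ B :=
    { inner := fun u w => φ (star u * w)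
      conj_inner_symm := fun u w => hφ.conj_symm u w
      re_inner_nonneg := fun u => hφ.re_nonneg u
      add_left := fun u v w => by simp [star_add, add_mul]
      smul_left := fun u v r => by
        simp [star_smul, smul_mul_assoc] }
  have h : ‖φ (star x * y)‖ * ‖φ (star y * x)‖
      ≤ (φ (star x * x)).re * (φ (star y * y)).re :=
    InnerProductSpace.Core.inner_mul_inner_self_le (𝕜 := ℂ) (F := B) x y
  have hnorm : ‖φ (star y * x)‖ = ‖φ (star x * y)‖ := by
    rw [← hφ.conj_symm x y, RCLike.norm_conj]
  rw [hnorm] at h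
  simpa [pow_two] using h

lemma Pos.bound_sq (hφ : Pos φ) (x b y : B) :
    ‖φ (star x * b * y)‖ ^ 2 ≤ ‖b‖ ^ 2 * ((φ (star x * x)).re * (φ (star y * y)).re) := by
  have h1 := hφ.cauchy_schwarz x (b * y)
  rw [← mul_assoc] at h1
  have key : star (b * y) * (b * y) ≤ star y * algebraMap ℝ B (‖b‖ ^ 2) * y := by
    have h2 : star b * b ≤ algebraMap ℝ B (‖b‖ ^ 2) := by
      letI : CStarAlgebra B :=
        { ‹NormedRing B›, ‹StarRing B›, ‹CStarRing B›, ‹NormedAlgebra ℂ B›,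
          ‹StarModule ℂ B›, ‹CompleteSpace B› with }
      exact CStarAlgebra.star_mul_le_algebraMap_norm_sq
    have h3 := star_left_conjugate_le_conjugate h2 y
    calc star (b * y) * (b * y) = star y * (star b * b) * y := by
          rw [star_mul]; noncomm_ring
    _ ≤ star y * algebraMap ℝ B (‖b‖ ^ 2) * y := by
          rw [mul_assoc, mul_assoc] at h3 ⊢; exact h3
  have e5 : star y * algebraMap ℝ B (‖b‖ ^ 2) * y = ((‖b‖ ^ 2 : ℝ) : ℂ) • (star y * y) := by
    rw [IsScalarTower.algebraMap_apply ℝ ℂ B, Algebra.algebraMap_eq_smul_one]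
    rw [mul_smul_comm, smul_mul_assoc, mul_one]
    simp [Complex.coe_algebraMap]
  have h4 : (φ (star (b * y) * (b * y))).re ≤ ‖b‖ ^ 2 * (φ (star y * y)).re := by
    have := hφ.mono key
    have h5 := (Complex.le_def.mp this).1
    rw [e5, map_smul] at h5
    rw [smul_eq_mul, Complex.re_ofReal_mul] at h5
    exact h5
  calc ‖φ (star x * b * y)‖ ^ 2
      ≤ (φ (star x * x)).re * (φ (star (b * y) * (b * y))).re := h1
    _ ≤ (φ (star x * x)).re * (‖b‖ ^ 2 * (φ (star y * y)).re) := by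
        apply mul_le_mul_of_nonneg_left h4 (hφ.re_nonneg x)
    _ = ‖b‖ ^ 2 * ((φ (star x * x)).re * (φ (star y * y)).re) := by ring

lemma Pos.bound (hφ : Pos φ) (x b y : B) :
    ‖φ (star x * b * y)‖ ≤ ‖b‖ * (Real.sqrt (φ (star x * x)).re * Real.sqrt (φ (star y * y)).re) := by
  have h := hφ.bound_sq x b y
  have h2 : ‖φ (star x * b * y)‖ = Real.sqrt (‖φ (star x * b * y)‖ ^ 2) :=
    (Real.sqrt_sq (norm_nonneg _)).symm
  rw [h2]
  calc Real.sqrt (‖φ (star x * b * y)‖ ^ 2)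
      ≤ Real.sqrt (‖b‖ ^ 2 * ((φ (star x * x)).re * (φ (star y * y)).re)) :=
        Real.sqrt_le_sqrt h
    _ = ‖b‖ * (Real.sqrt (φ (star x * x)).re * Real.sqrt (φ (star y * y)).re) := by
        rw [Real.sqrt_mul (by positivity), Real.sqrt_sq (norm_nonneg b),
          Real.sqrt_mul (hφ.re_nonneg x)]


lemma Pos.one_re_nonneg (hφ : Pos φ) : 0 ≤ (φ 1).re := by
  simpa using hφ.re_nonneg 1

lemma Pos.norm_apply_le (hφ : Pos φ) (b : B) : ‖φ b‖ ≤ (φ 1).re * ‖b‖ := by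
  have h := hφ.bound 1 b 1
  simp only [star_one, one_mul, mul_one] at h
  rw [Real.mul_self_sqrt hφ.one_re_nonneg] at h
  linarith [h]

lemma isState_of_pos_of_one (hφ : Pos φ) (h1 : φ 1 = 1) : IsState φ := by
  haveI : Nontrivial B := by
    by_contra hn
    rw [not_nontrivial_iff_subsingleton] at hn
    have : (1 : B) = 0 := Subsingleton.elim _ _
    rw [this, map_zero] at h1
    exact one_ne_zero h1.symm
  constructor
  · refine le_antisymm (φ.opNorm_le_bound zero_le_one fun b => ?_) ?_
    · have := hφ.norm_apply_le b
      rw [h1] at this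
      simpa using this
    · have := φ.le_opNorm 1
      rw [h1] at this
      simpa using this
  · exact hφ

lemma state_one {φ : B →L[ℂ] ℂ} (hs : IsState φ) : φ 1 = 1 := by
  have hφ : Pos φ := hs.2
  haveI : Nontrivial B := by
    by_contra hn
    rw [not_nontrivial_iff_subsingleton] at hn
    have : φ = 0 := by
      ext b
      rw [Subsingleton.elim b (0 : B), map_zero]; rfl
    rw [this] at hs
    have h0 : (1 : ℝ) = 0 := by simpa using hs.1.symm
    norm_num at h0
  have him : (φ 1).im = 0 := by simpa using hφ.im_zero 1
  have hle : (φ 1).re ≤ 1 := by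
    have h := φ.le_opNorm 1
    rw [hs.1, CStarRing.norm_one, one_mul] at h
    calc (φ 1).re ≤ |(φ 1).re| := le_abs_self _
      _ ≤ ‖φ 1‖ := Complex.abs_re_le_norm _
      _ ≤ 1 := h
  have hge : 1 ≤ (φ 1).re := by
    have : ‖φ‖ ≤ (φ 1).re := φ.opNorm_le_bound hφ.one_re_nonneg hφ.norm_apply_le
    rw [hs.1] at this
    exact this
  apply Complex.ext <;> simp [him]
  linarith

/-- conjugation map `b ↦ star x * b * x` as a CLM. -/
def conjM (x : B) : B →L[ℂ] B :=
  (ContinuousLinearMap.mul ℂ B (star x)).comp ((ContinuousLinearMap.mul ℂ B).flip x)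

lemma conjM_apply (x b : B) : conjM x b = star x * b * x := by
  simp [conjM, mul_assoc, ContinuousLinearMap.mul_apply']


end StateAux

end AuxPos

section Transfer

open StateAux

variable {A : Type*} [NormedRing A] [StarRing A] [NormedAlgebra ℂ A]
  {B : Type*} [NormedRing B] [StarRing B] [CStarRing B] [NormedAlgebra ℂ B]
  [StarModule ℂ B] [PartialOrder B] [StarOrderedRing B] [CompleteSpace B]
  {H : Type*} [NormedAddCommGroup H] [InnerProductSpace ℂ H] [CompleteSpace H]

lemma rep_hval (π : A →⋆ₐ[ℂ] (H →L[ℂ] H)) (ι : A →⋆ₐ[ℂ] B)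
    (g : B →L[ℂ] ℂ) (v : H) (hgv : ∀ a : A, g (ι a) = ⟪v, π a v⟫) (d a : A) :
    g (star (ι d) * ι a * ι d) = ⟪π d v, π a (π d v)⟫ := by
  have h1 : star (ι d) * ι a * ι d = ι (star d * a * d) := by
    rw [map_mul, map_mul, map_star]
  rw [h1, hgv]
  have h2 : π (star d * a * d) = π (star d) * (π a * π d) := by
    rw [map_mul, map_mul, mul_assoc]
  rw [h2]
  have h3 : (π (star d) * (π a * π d)) v = π (star d) (π a (π d v)) := rfl
  rw [h3, map_star, ContinuousLinearMap.star_eq_adjoint,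
    ContinuousLinearMap.adjoint_inner_right]

lemma rep_hnorm (π : A →⋆ₐ[ℂ] (H →L[ℂ] H)) (ι : A →⋆ₐ[ℂ] B)
    (g : B →L[ℂ] ℂ) (v : H) (hgv : ∀ a : A, g (ι a) = ⟪v, π a v⟫) (d : A) :
    g (star (ι d) * ι d) = ((‖π d v‖ : ℂ))^2 := by
  have h1 := rep_hval π ι g v hgv d 1
  simp only [map_one, mul_one, ContinuousLinearMap.one_apply] at h1
  rw [h1, inner_self_eq_norm_sq_to_K]
  norm_num

lemma transfer (π : A →⋆ₐ[ℂ] (H →L[ℂ] H)) (ι : A →⋆ₐ[ℂ] B)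
    (g : B →L[ℂ] ℂ) (hgs : IsState g)
    (v : H) (hgv : ∀ a : A, g (ι a) = ⟪v, π a v⟫)
    (c : ℕ → A) (w : H) (hc : Tendsto (fun n => π (c n) v) atTop (𝓝 w)) (hw : ‖w‖ = 1) :
    ∃ h : B →L[ℂ] ℂ, IsState h ∧ (∀ a : A, h (ι a) = ⟪w, π a w⟫) ∧
      ∀ b : B, Tendsto (fun n => g (star (ι (c n)) * b * ι (c n))) atTop (𝓝 (h b)) := by
  have hφ : Pos g := hgs.2
  set x : ℕ → B := fun n => ι (c n) with hx
  set vs : ℕ → H := fun n => π (c n) v with hvs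
  set Φ : ℕ → (B →L[ℂ] ℂ) := fun n => g.comp (conjM (x n)) with hΦ
  have hΦapp : ∀ n b, Φ n b = g (star (x n) * b * x n) := fun n b => by
    simp [hΦ, conjM_apply]
  have hre : ∀ d : A, (g (star (ι d) * ι d)).re = ‖π d v‖ ^ 2 := fun d => by
    rw [rep_hnorm π ι g v hgv d]
    rw [← Complex.ofReal_pow, Complex.ofReal_re]
  have hsq : ∀ d : A, Real.sqrt (g (star (ι d) * ι d)).re = ‖π d v‖ := fun d => by
    rw [hre]; exact Real.sqrt_sq (norm_nonneg _)
  -- difference bound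
  have hdiff : ∀ n m : ℕ, ‖Φ n - Φ m‖ ≤ ‖vs n - vs m‖ * (‖vs n‖ + ‖vs m‖) := by
    intro n m
    apply ContinuousLinearMap.opNorm_le_bound _ (by positivity)
    intro b
    have hsplit : (Φ n - Φ m) b
        = g (star (x n - x m) * b * x n) + g (star (x m) * b * (x n - x m)) := by
      simp only [ContinuousLinearMap.sub_apply, hΦapp]
      have halg : star (x n - x m) * b * x n + star (x m) * b * (x n - x m)
          = star (x n) * b * x n - star (x m) * b * x m := by
        rw [star_sub]; noncomm_ring
      rw [← map_sub, ← halg, map_add]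
    have hxsub : x n - x m = ι (c n - c m) := by simp [hx, map_sub]
    have hvsub : π (c n - c m) v = vs n - vs m := by
      rw [map_sub]; rfl
    have hb1 := hφ.bound (x n - x m) b (x n)
    have hb2 := hφ.bound (x m) b (x n - x m)
    rw [hxsub] at hb1 hb2
    rw [hsq, hsq] at hb1
    rw [hsq, hsq] at hb2
    have e1 : (π (c n)) v = vs n := rfl
    have e2 : (π (c m)) v = vs m := rfl
    rw [hvsub, e1] at hb1
    rw [hvsub, e2] at hb2
    rw [hsplit, hxsub]
    calc ‖g (star (ι (c n - c m)) * b * x n) + g (star (x m) * b * ι (c n - c m))‖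
        ≤ ‖g (star (ι (c n - c m)) * b * x n)‖ + ‖g (star (x m) * b * ι (c n - c m))‖ :=
          norm_add_le _ _
      _ ≤ ‖b‖ * (‖vs n - vs m‖ * ‖vs n‖) + ‖b‖ * (‖vs m‖ * ‖vs n - vs m‖) :=
          add_le_add hb1 hb2
      _ = ‖vs n - vs m‖ * (‖vs n‖ + ‖vs m‖) * ‖b‖ := by ring
  -- Cauchy sequence
  have hΦc : CauchySeq Φ := by
    rw [Metric.cauchySeq_iff]
    intro ε hε
    set δ : ℝ := min 1 (ε / (2 * (2 * ‖w‖ + 3))) with hδ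
    have hδ1 : δ ≤ 1 := min_le_left _ _
    have hδ2 : δ ≤ ε / (2 * (2 * ‖w‖ + 3)) := min_le_right _ _
    have hδpos : 0 < δ := lt_min one_pos (by positivity)
    obtain ⟨N, hN⟩ := (Metric.tendsto_atTop.mp hc) δ hδpos
    refine ⟨N, fun n hn m hm => ?_⟩
    have h1 := hN n hn
    have h2 := hN m hm
    rw [dist_eq_norm] at h1 h2
    have hnm : ‖vs n - vs m‖ ≤ 2 * δ := by
      calc ‖vs n - vs m‖ = ‖(vs n - w) + (w - vs m)‖ := by rw [sub_add_sub_cancel]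
        _ ≤ ‖vs n - w‖ + ‖w - vs m‖ := norm_add_le _ _
        _ ≤ δ + δ := by
            have h2' : ‖w - vs m‖ < δ := by rw [norm_sub_rev]; exact h2
            exact add_le_add h1.le h2'.le
        _ = 2 * δ := by ring
    have hbn : ‖vs n‖ ≤ ‖w‖ + 1 := by
      calc ‖vs n‖ = ‖(vs n - w) + w‖ := by rw [sub_add_cancel]
        _ ≤ ‖vs n - w‖ + ‖w‖ := norm_add_le _ _
        _ ≤ ‖w‖ + 1 := by linarith
    have hbm : ‖vs m‖ ≤ ‖w‖ + 1 := by
      calc ‖vs m‖ = ‖(vs m - w) + w‖ := by rw [sub_add_cancel]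
        _ ≤ ‖vs m - w‖ + ‖w‖ := norm_add_le _ _
        _ ≤ ‖w‖ + 1 := by linarith
    rw [dist_eq_norm]
    have hkey : ‖Φ n - Φ m‖ ≤ (2 * δ) * (2 * ‖w‖ + 2) := by
      calc ‖Φ n - Φ m‖ ≤ ‖vs n - vs m‖ * (‖vs n‖ + ‖vs m‖) := hdiff n m
        _ ≤ (2 * δ) * (2 * ‖w‖ + 2) := by
            apply mul_le_mul hnm (by linarith) (by positivity) (by positivity)
    have hwpos : (0:ℝ) < 2 * (2 * ‖w‖ + 3) := by positivity
    have hδ3 : δ * (2 * (2 * ‖w‖ + 3)) ≤ ε := by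
      rw [← le_div_iff₀ hwpos]; exact hδ2
    have : (2 * δ) * (2 * ‖w‖ + 2) < ε := by nlinarith [norm_nonneg w, hδpos]
    linarith
  obtain ⟨h, hΦh⟩ := cauchySeq_tendsto_of_complete hΦc
  have hpt : ∀ b : B, Tendsto (fun n => Φ n b) atTop (𝓝 (h b)) := fun b =>
    ((ContinuousLinearMap.apply ℂ ℂ b).continuous.tendsto h).comp hΦh
  have hposh : Pos h := by
    intro b hb
    refine ge_of_tendsto (hpt b) (Eventually.of_forall fun n => ?_)
    rw [hΦapp]
    exact hφ _ (star_left_conjugate_nonneg hb (x n))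
  have hA : ∀ a : A, h (ι a) = ⟪w, π a w⟫ := by
    intro a
    have h1 : Tendsto (fun n => (⟪vs n, π a (vs n)⟫ : ℂ)) atTop (𝓝 ⟪w, π a w⟫) :=
      hc.inner (((π a).continuous.tendsto w).comp hc)
    have h2 : ∀ n, Φ n (ι a) = ⟪vs n, π a (vs n)⟫ := fun n => by
      rw [hΦapp]; exact rep_hval π ι g v hgv (c n) a
    have h3 : Tendsto (fun n => Φ n (ι a)) atTop (𝓝 ⟪w, π a w⟫) := by
      simp only [h2]; exact h1
    exact tendsto_nhds_unique (hpt (ι a)) h3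
  have hone : h 1 = 1 := by
    have h2 : ∀ n, Φ n 1 = ((‖vs n‖ : ℂ))^2 := fun n => by
      rw [hΦapp, mul_one]
      exact rep_hnorm π ι g v hgv (c n)
    have h3 : Tendsto (fun n => ((‖vs n‖ : ℂ))^2) atTop (𝓝 (((‖w‖ : ℂ))^2)) := by
      apply Tendsto.pow
      exact (Complex.continuous_ofReal.tendsto _).comp hc.norm
    have h4 : Tendsto (fun n => Φ n 1) atTop (𝓝 (((‖w‖ : ℂ))^2)) := by
      simp only [h2]; exact h3
    have := tendsto_nhds_unique (hpt 1) h4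
    rw [this, hw]; norm_num
  refine ⟨h, isState_of_pos_of_one hposh hone, hA, fun b => ?_⟩
  have := hpt b
  simp only [hΦapp] at this
  exact this

end Transfer


section TransferAux2
open StateAux
variable {A : Type*} [NormedRing A] [StarRing A] [NormedAlgebra ℂ A]
  {B : Type*} [NormedRing B] [StarRing B] [CStarRing B] [NormedAlgebra ℂ B]
  [StarModule ℂ B] [PartialOrder B] [StarOrderedRing B] [CompleteSpace B]
  {H : Type*} [NormedAddCommGroup H] [InnerProductSpace ℂ H] [CompleteSpace H]

lemma span_range_coe_eq (π : A →⋆ₐ[ℂ] (H →L[ℂ] H)) (ξ : H) :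
    ((Submodule.span ℂ (Set.range fun x : A => π x ξ) : Submodule ℂ H) : Set H)
      = Set.range fun x : A => π x ξ := by
  let T : A →ₗ[ℂ] H :=
    { toFun := fun a => π a ξ
      map_add' := fun a b => by simp [map_add, ContinuousLinearMap.add_apply]
      map_smul' := fun r a => by simp [map_smul, ContinuousLinearMap.smul_apply] }
  have hr : (Set.range fun x : A => π x ξ) = ↑(LinearMap.range T) := by
    rw [LinearMap.coe_range]; rfl
  rw [hr, Submodule.span_eq]

lemma dense_seq_rep (π : A →⋆ₐ[ℂ] (H →L[ℂ] H)) (ξ : H)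
    (hd : Dense (Set.range fun x : A => π x ξ)) (p : H) :
    ∃ c : ℕ → A, Tendsto (fun n => π (c n) ξ) atTop (𝓝 p) := by
  obtain ⟨u, hu_mem, hu_lim⟩ := mem_closure_iff_seq_limit.mp (hd p)
  choose aa haa using hu_mem
  refine ⟨aa, ?_⟩
  have : (fun n => π (aa n) ξ) = u := funext haa
  rw [this]; exact hu_lim


end TransferAux2

section Recovery
variable {A : Type*} [NormedRing A] [StarRing A] [NormedAlgebra ℂ A]
  {B : Type*} [NormedRing B] [StarRing B] [CStarRing B] [NormedAlgebra ℂ B]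
  [StarModule ℂ B] [PartialOrder B] [StarOrderedRing B] [CompleteSpace B]
  {H : Type*} [NormedAddCommGroup H] [InnerProductSpace ℂ H] [CompleteSpace H]
open StateAux

lemma recovery (π : A →⋆ₐ[ℂ] (H →L[ℂ] H)) (ι : A →⋆ₐ[ℂ] B)
    (g : B →L[ℂ] ℂ) (hgs : IsState g)
    (v : H) (hgv : ∀ a : A, g (ι a) = ⟪v, π a v⟫) (hv : ‖v‖ = 1) (a : A) (b : B) :
    ‖g (star (ι a) * b * ι a) - g b‖ ≤ ‖b‖ * (‖π a v - v‖ * (‖π a v‖ + 1)) := by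
  have hφ : Pos g := hgs.2
  have g1 : g 1 = 1 := state_one hgs
  set x : B := ι a with hxd
  have decomp : g (star x * b * x) - g b
      = g (star (x - 1) * b * x) + g (star 1 * b * (x - 1)) := by
    have halg : star (x - 1) * b * x + star 1 * b * (x - 1) = star x * b * x - b := by
      rw [star_sub, star_one]; noncomm_ring
    rw [← map_add, halg, map_sub]
  have hxx : g (star x * x) = ((‖π a v‖ : ℂ))^2 := rep_hnorm π ι g v hgv a
  have hxxre : (g (star x * x)).re = ‖π a v‖^2 := by
    rw [hxx, ← Complex.ofReal_pow, Complex.ofReal_re]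
  have hstar : g (star x) = ⟪π a v, v⟫ := by
    rw [hxd, ← map_star, hgv, map_star, ContinuousLinearMap.star_eq_adjoint,
      ContinuousLinearMap.adjoint_inner_right]
  have hxval : g x = ⟪v, π a v⟫ := hgv a
  have hvv : g 1 = ⟪v, v⟫ := by
    rw [g1, inner_self_eq_norm_sq_to_K, hv]
    norm_num
  have hdiffv : g (star (x - 1) * (x - 1)) = ((‖π a v - v‖ : ℂ))^2 := by
    have hexp : star (x - 1) * (x - 1) = star x * x - star x - x + 1 := by
      rw [star_sub, star_one]; noncomm_ring
    calc g (star (x - 1) * (x - 1)) = g (star x * x) - g (star x) - g x + g 1 := by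
          rw [hexp, map_add, map_sub, map_sub]
      _ = ⟪π a v, π a v⟫ - ⟪π a v, v⟫ - ⟪v, π a v⟫ + ⟪v, v⟫ := by
          rw [hxx, hstar, hxval, hvv]
          congr 3
          rw [inner_self_eq_norm_sq_to_K]
          norm_num
      _ = ⟪π a v - v, π a v - v⟫ := (inner_sub_sub_self _ _).symm
      _ = ((‖π a v - v‖ : ℂ))^2 := by
          rw [inner_self_eq_norm_sq_to_K]; norm_num
  have hdiffre : (g (star (x - 1) * (x - 1))).re = ‖π a v - v‖^2 := by
    rw [hdiffv, ← Complex.ofReal_pow, Complex.ofReal_re]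
  have hone : (g (star (1 : B) * 1)).re = 1 := by
    rw [star_one, mul_one, g1]
    norm_num
  have hb1 := hφ.bound (x - 1) b x
  have hb2 := hφ.bound 1 b (x - 1)
  rw [hdiffre, hxxre, Real.sqrt_sq (norm_nonneg _), Real.sqrt_sq (norm_nonneg _)] at hb1
  rw [hone, hdiffre, Real.sqrt_one, Real.sqrt_sq (norm_nonneg _)] at hb2
  calc ‖g (star x * b * x) - g b‖
      = ‖g (star (x - 1) * b * x) + g (star 1 * b * (x - 1))‖ := by rw [decomp]
    _ ≤ ‖g (star (x - 1) * b * x)‖ + ‖g (star 1 * b * (x - 1))‖ := norm_add_le _ _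
    _ ≤ ‖b‖ * (‖π a v - v‖ * ‖π a v‖) + ‖b‖ * (1 * ‖π a v - v‖) := add_le_add hb1 hb2
    _ = ‖b‖ * (‖π a v - v‖ * (‖π a v‖ + 1)) := by ring

end Recovery


/-- if two pure states on `A` have unitarily equivalent GNS representations
and the first extends uniquely to `B`, then so does the second. -/
theorem uniquelyExtends_of_gns_equiv
    {A B : Type*} [NormedRing A] [StarRing A] [CStarRing A] [NormedAlgebra ℂ A]
    [StarModule ℂ A] [PartialOrder A] [StarOrderedRing A] [CompleteSpace A]
    [NormedRing B] [StarRing B] [CStarRing B] [NormedAlgebra ℂ B]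
    [StarModule ℂ B] [PartialOrder B] [StarOrderedRing B] [CompleteSpace B]
    (ι : A →⋆ₐ[ℂ] B) (hι : Isometry ι)
    (f₁ f₂ : A →L[ℂ] ℂ) (hf₁ : IsPureState f₁) (hf₂ : IsPureState f₂)
    (hequiv : ∃ (R₁ R₂ : RepOn A) (ξ₁ : R₁.space) (ξ₂ : R₂.space),
      IsGNSRep f₁ R₁ ξ₁ ∧ IsGNSRep f₂ R₂ ξ₂ ∧ RepUnitarilyEquiv R₁ R₂)
    (h₁ : UniquelyExtends ι f₁) :
    UniquelyExtends ι f₂ := by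
  obtain ⟨R₁, R₂, ξ₁, ξ₂, ⟨hξ₁, hf₁v, hd₁⟩, ⟨hξ₂, hf₂v, hd₂⟩, U, hU⟩ := hequiv
  set η : R₁.space := U.symm ξ₂ with hηd
  have hUη : U η = ξ₂ := U.apply_symm_apply ξ₂
  have hηnorm : ‖η‖ = 1 := by
    rw [hηd, ← hξ₂]
    exact U.symm.norm_map ξ₂
  have hf₂η : ∀ a : A, f₂ a = ⟪η, R₁.π a η⟫ := by
    intro a
    calc f₂ a = ⟪ξ₂, R₂.π a ξ₂⟫ := hf₂v a
      _ = ⟪U η, R₂.π a (U η)⟫ := by rw [hUη]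
      _ = ⟪U η, U (R₁.π a η)⟫ := by rw [hU a η]
      _ = ⟪η, R₁.π a η⟫ := U.inner_map_map _ _
  -- dense ranges
  have hD1 : Dense (Set.range fun x : A => R₁.π x ξ₁) := by
    rw [← span_range_coe_eq R₁.π ξ₁]; exact hd₁
  have hD2' : Dense (Set.range fun x : A => R₂.π x ξ₂) := by
    rw [← span_range_coe_eq R₂.π ξ₂]; exact hd₂
  have hD2 : Dense (Set.range fun x : A => R₁.π x η) := by
    have himg : (Set.range fun x : A => R₁.π x η)
        = U.symm '' (Set.range fun x : A => R₂.π x ξ₂) := by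
      rw [← Set.range_comp]
      apply congrArg
      funext x
      show R₁.π x η = U.symm (R₂.π x ξ₂)
      rw [← hUη, ← hU x η, U.symm_apply_apply]
    rw [himg, dense_iff_closure_eq]
    have himcl := U.symm.toHomeomorph.image_closure (Set.range fun x : A => R₂.π x ξ₂)
    simp only [LinearIsometryEquiv.coe_toHomeomorph] at himcl
    rw [← himcl]
    rw [dense_iff_closure_eq] at hD2'
    rw [hD2', Set.image_univ]
    exact U.symm.surjective.range_eq
  obtain ⟨aa, haseq⟩ := dense_seq_rep R₁.π ξ₁ hD1 η
  obtain ⟨bb, hbseq⟩ := dense_seq_rep R₁.π η hD2 ξ₁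
  -- the unique extension of f₁
  obtain ⟨g₁, ⟨hg₁s, hg₁ext⟩, hg₁uniq⟩ := h₁
  have hg₁v : ∀ a : A, g₁ (ι a) = ⟪ξ₁, R₁.π a ξ₁⟫ := fun a => by
    rw [hg₁ext a]; exact hf₁v a
  -- existence of an extension of f₂
  obtain ⟨g₂, hg₂s, hg₂val, _⟩ := transfer R₁.π ι g₁ hg₁s ξ₁ hg₁v aa η haseq hηnorm
  have hg₂ext : ∀ a : A, g₂ (ι a) = f₂ a := fun a => by
    rw [hg₂val a, ← hf₂η a]
  -- key: any extension of f₂ is determined by g₁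
  have key : ∀ g : B →L[ℂ] ℂ, IsState g → (∀ a : A, g (ι a) = f₂ a) →
      ∀ b : B, Tendsto (fun n => g₁ (star (ι (aa n)) * b * ι (aa n))) atTop (𝓝 (g b)) := by
    intro g hgs hgext b
    have hgv : ∀ a : A, g (ι a) = ⟪η, R₁.π a η⟫ := fun a => by
      rw [hgext a]; exact hf₂η a
    obtain ⟨h, hhs, hhval, hhconv⟩ := transfer R₁.π ι g hgs η hgv bb ξ₁ hbseq hξ₁
    have hhf₁ : h = g₁ := by
      apply hg₁uniq
      exact ⟨hhs, fun a => by rw [hhval a, ← hf₁v a]⟩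
    subst hhf₁
    -- step 1 : for fixed n, m-limit
    have step1 : ∀ n : ℕ, Tendsto
        (fun m => g (star (ι (aa n * bb m)) * b * ι (aa n * bb m))) atTop
        (𝓝 (h (star (ι (aa n)) * b * ι (aa n)))) := by
      intro n
      have := hhconv (star (ι (aa n)) * b * ι (aa n))
      have halg : ∀ m, star (ι (bb m)) * (star (ι (aa n)) * b * ι (aa n)) * ι (bb m)
          = star (ι (aa n * bb m)) * b * ι (aa n * bb m) := by
        intro m
        rw [map_mul, star_mul]
        noncomm_ring
      simp only [halg] at this
      exact this
    -- step 3 : n-th bound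
    have step3 : ∀ n : ℕ, ‖h (star (ι (aa n)) * b * ι (aa n)) - g b‖
        ≤ ‖b‖ * (‖R₁.π (aa n) ξ₁ - η‖ * (‖R₁.π (aa n) ξ₁‖ + 1)) := by
      intro n
      have hm : Tendsto (fun m => R₁.π (aa n * bb m) η) atTop (𝓝 (R₁.π (aa n) ξ₁)) := by
        have hcomp : ∀ m, R₁.π (aa n * bb m) η = R₁.π (aa n) (R₁.π (bb m) η) := by
          intro m; rw [map_mul]; rfl
        simp only [hcomp]
        exact ((R₁.π (aa n)).continuous.tendsto ξ₁).comp hbseq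
      have hLHS : Tendsto
          (fun m => ‖g (star (ι (aa n * bb m)) * b * ι (aa n * bb m)) - g b‖) atTop
          (𝓝 ‖h (star (ι (aa n)) * b * ι (aa n)) - g b‖) :=
        ((step1 n).sub tendsto_const_nhds).norm
      have hRHS : Tendsto
          (fun m => ‖b‖ * (‖R₁.π (aa n * bb m) η - η‖ * (‖R₁.π (aa n * bb m) η‖ + 1))) atTop
          (𝓝 (‖b‖ * (‖R₁.π (aa n) ξ₁ - η‖ * (‖R₁.π (aa n) ξ₁‖ + 1)))) := by
        apply Tendsto.const_mul
        exact ((hm.sub tendsto_const_nhds).norm).mul (hm.norm.add tendsto_const_nhds)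
      refine le_of_tendsto_of_tendsto' hLHS hRHS fun m => ?_
      exact recovery R₁.π ι g hgs η hgv hηnorm (aa n * bb m) b
    -- step 4 : squeeze
    have hzero : Tendsto
        (fun n => ‖b‖ * (‖R₁.π (aa n) ξ₁ - η‖ * (‖R₁.π (aa n) ξ₁‖ + 1))) atTop (𝓝 0) := by
      have h0 : Tendsto (fun n => ‖R₁.π (aa n) ξ₁ - η‖) atTop (𝓝 0) := by
        have := (haseq.sub (tendsto_const_nhds (x := η))).norm
        simpa using this
      have h1 : Tendsto (fun n => ‖R₁.π (aa n) ξ₁‖ + 1) atTop (𝓝 (‖η‖ + 1)) :=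
        haseq.norm.add tendsto_const_nhds
      have := (h0.mul h1).const_mul ‖b‖
      simpa using this
    rw [tendsto_iff_norm_sub_tendsto_zero]
    exact squeeze_zero (fun n => norm_nonneg _) step3 hzero
  refine ⟨g₂, ⟨hg₂s, hg₂ext⟩, ?_⟩
  intro g hg
  ext b
  exact tendsto_nhds_unique (key g hg.1 hg.2 b) (key g₂ hg₂s hg₂ext b)
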